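/- Assume f = max A = b−1 and let s be a complex number with Re s > log N / log b. Then for every real m ≥ 0: e^{−m} E(m) = Σ_{l=0}^∞ ( ∏_{k=1}^{l} α_B(−m b^{−k}) ) e^{−m b^{−l}} b^{−ls}, and this series converges absolutely (its l-th term is bounded in absolute value by N^l b^{−l·Re s}). -/

import Mathlib

open Finset

noncomputable section

/-- The rational point a₁/b + ⋯ + a_l/b^l attached to a digit tuple. -/
def digitVal (b l : ℕ) (a : Fin l → ℕ) : ℝ :=
  ∑ i : Fin l, (a i : ℝ) / (b : ℝ) ^ ((i : ℕ) + 1)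

/-- The finset of digit tuples of length l with entries in A. -/
def tuples (A : Finset ℕ) (l : ℕ) : Finset (Fin l → ℕ) :=
  Fintype.piFinset fun _ => A

/-- E(t) = 1 + Σ_{l≥1} Σ_{(a₁,…,a_l)∈A^l} e^{t(a₁/b+⋯+a_l/b^l)} b^{−ls},
the exponential generating function of the moments. -/
def egf (b : ℕ) (A : Finset ℕ) (s : ℂ) (t : ℝ) : ℂ :=
  ∑' l : ℕ, ∑ a ∈ tuples A l, ((Real.exp (t * digitVal b l a) : ℝ) : ℂ) * (b : ℂ) ^ (-(l : ℂ) * s)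

/-- α_B(t) = Σ_{d∈B} e^{dt}. -/
def alphaB (B : Finset ℕ) (t : ℝ) : ℝ := ∑ d ∈ B, Real.exp (d * t)

/-- The l-th term of the series appearing in Statement 6. -/
def egfTerm (b : ℕ) (B : Finset ℕ) (s : ℂ) (m : ℝ) (l : ℕ) : ℂ :=
  ((∏ k ∈ Finset.Icc 1 l, alphaB B (-(m * (b : ℝ) ^ (-(k : ℤ)))) : ℝ) : ℂ) *
    ((Real.exp (-(m * (b : ℝ) ^ (-(l : ℤ)))) : ℝ) : ℂ) * (b : ℂ) ^ (-(l : ℂ) * s)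

private lemma geom_sum_real {x : ℝ} (hx : x ≠ 0) (l : ℕ) :
    ∑ i ∈ Finset.range l, (x - 1) / x ^ (i + 1) = 1 - 1 / x ^ l := by
  induction l with
  | zero => simp
  | succ n ih =>
    rw [Finset.sum_range_succ, ih]
    field_simp
    ring

private lemma term_eq (b : ℕ) (hb : 2 ≤ b) (A : Finset ℕ) (hAb : A ⊆ Finset.range b)
    (m : ℝ) (l : ℕ) :
    Real.exp (-m) * ∑ a ∈ tuples A l, Real.exp (m * digitVal b l a)
      = (∏ k ∈ Finset.Icc 1 l,
          alphaB (A.image fun a => b - 1 - a) (-(m * (b : ℝ) ^ (-(k : ℤ)))))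
        * Real.exp (-(m * (b : ℝ) ^ (-(l : ℤ)))) := by
  have hb0 : (b : ℝ) ≠ 0 := by positivity
  have hb1 : (1 : ℕ) ≤ b := by omega
  -- the exponent identity
  have expo : ∀ a ∈ tuples A l,
      -m + m * digitVal b l a
        = (∑ i : Fin l, -(m * ((b - 1 - a i : ℕ) : ℝ) * (b : ℝ) ^ (-(((i : ℕ) + 1 : ℕ) : ℤ))))
            + -(m * (b : ℝ) ^ (-(l : ℤ))) := by
    intro a ha
    have hmem : ∀ i, a i ∈ A := by
      simpa [tuples, Fintype.mem_piFinset] using ha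
    have hcast : ∀ i : Fin l, ((b - 1 - a i : ℕ) : ℝ) = (b : ℝ) - 1 - (a i : ℝ) := by
      intro i
      have h1 : a i ≤ b - 1 := Nat.le_sub_one_of_lt (Finset.mem_range.mp (hAb (hmem i)))
      rw [Nat.cast_sub h1, Nat.cast_sub hb1]
      push_cast
      ring
    have hrw : ∀ i : Fin l,
        -(m * ((b - 1 - a i : ℕ) : ℝ) * (b : ℝ) ^ (-(((i : ℕ) + 1 : ℕ) : ℤ)))
          = -(m * (((b : ℝ) - 1) / (b : ℝ) ^ ((i : ℕ) + 1)))
              + m * ((a i : ℝ) / (b : ℝ) ^ ((i : ℕ) + 1)) := by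
      intro i
      rw [hcast i, zpow_neg, zpow_natCast]
      field_simp
      ring
    have hgeom : ∑ i : Fin l, ((b : ℝ) - 1) / (b : ℝ) ^ ((i : ℕ) + 1)
        = 1 - 1 / (b : ℝ) ^ l := by
      rw [Fin.sum_univ_eq_sum_range (fun i => ((b : ℝ) - 1) / (b : ℝ) ^ (i + 1))]
      exact geom_sum_real hb0 l
    simp only [hrw, Finset.sum_add_distrib]
    have h1 : ∑ i : Fin l, -(m * (((b : ℝ) - 1) / (b : ℝ) ^ ((i : ℕ) + 1)))
        = -(m * (1 - 1 / (b : ℝ) ^ l)) := by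
      simp [← Finset.mul_sum, hgeom]
    have h2 : ∑ i : Fin l, m * ((a i : ℝ) / (b : ℝ) ^ ((i : ℕ) + 1)) = m * digitVal b l a := by
      rw [digitVal, Finset.mul_sum]
    rw [h1, h2, zpow_neg, zpow_natCast]
    ring
  -- per-coordinate sum over A equals alphaB of image
  have hinj : ∀ x ∈ A, ∀ y ∈ A, b - 1 - x = b - 1 - y → x = y := by
    intro x hx y hy h
    have hx' := Finset.mem_range.mp (hAb hx)
    have hy' := Finset.mem_range.mp (hAb hy)
    omega
  have hcoord : ∀ k : ℕ,
      alphaB (A.image fun a => b - 1 - a) (-(m * (b : ℝ) ^ (-(k : ℤ))))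
        = ∑ x ∈ A, Real.exp (-(m * ((b - 1 - x : ℕ) : ℝ) * (b : ℝ) ^ (-(k : ℤ)))) := by
    intro k
    rw [alphaB, Finset.sum_image hinj]
    refine Finset.sum_congr rfl fun x hx => ?_
    congr 1
    ring
  calc Real.exp (-m) * ∑ a ∈ tuples A l, Real.exp (m * digitVal b l a)
      = ∑ a ∈ tuples A l, Real.exp (-m + m * digitVal b l a) := by
        rw [Finset.mul_sum]
        exact Finset.sum_congr rfl fun a _ => (Real.exp_add _ _).symm
    _ = ∑ a ∈ tuples A l,
          (∏ i : Fin l,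
              Real.exp (-(m * ((b - 1 - a i : ℕ) : ℝ) * (b : ℝ) ^ (-(((i : ℕ) + 1 : ℕ) : ℤ)))))
            * Real.exp (-(m * (b : ℝ) ^ (-(l : ℤ)))) := by
        refine Finset.sum_congr rfl fun a ha => ?_
        rw [expo a ha, Real.exp_add, Real.exp_sum]
    _ = (∑ a ∈ tuples A l,
          ∏ i : Fin l,
              Real.exp (-(m * ((b - 1 - a i : ℕ) : ℝ) * (b : ℝ) ^ (-(((i : ℕ) + 1 : ℕ) : ℤ)))))
            * Real.exp (-(m * (b : ℝ) ^ (-(l : ℤ)))) := by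
        rw [Finset.sum_mul]
    _ = (∏ i : Fin l, ∑ x ∈ A,
              Real.exp (-(m * ((b - 1 - x : ℕ) : ℝ) * (b : ℝ) ^ (-(((i : ℕ) + 1 : ℕ) : ℤ)))))
            * Real.exp (-(m * (b : ℝ) ^ (-(l : ℤ)))) := by
        rw [tuples]
        congr 1
        exact (Finset.prod_univ_sum (fun _ : Fin l => A)
          (fun i x => Real.exp
            (-(m * ((b - 1 - x : ℕ) : ℝ) * (b : ℝ) ^ (-(((i : ℕ) + 1 : ℕ) : ℤ)))))).symm
    _ = (∏ k ∈ Finset.Icc 1 l,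
          alphaB (A.image fun a => b - 1 - a) (-(m * (b : ℝ) ^ (-(k : ℤ)))))
            * Real.exp (-(m * (b : ℝ) ^ (-(l : ℤ)))) := by
        congr 1
        rw [← Finset.Ico_add_one_right_eq_Icc, Finset.prod_Ico_eq_prod_range]
        rw [Fin.prod_univ_eq_prod_range
          (fun i => ∑ x ∈ A, Real.exp (-(m * ((b - 1 - x : ℕ) : ℝ) * (b : ℝ) ^ (-((i + 1 : ℕ) : ℤ)))))]
        refine Finset.prod_congr rfl fun i _ => ?_
        rw [hcoord (1 + i), Nat.add_comm 1 i]

/-- Assume max A = b−1 and Re s > log N / log b.  For every real m ≥ 0,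
e^{−m}E(m) = Σ_{l≥0} (Π_{k=1}^l α_B(−mb^{−k})) e^{−mb^{−l}} b^{−ls}, the series
converging absolutely, its l-th term being bounded by N^l b^{−l·Re s}. -/
theorem egf_product_expansion
    (b : ℕ) (hb : 2 ≤ b) (A : Finset ℕ) (hA : A.Nonempty) (hAb : A ⊆ Finset.range b)
    (hbA : b - 1 ∈ A)
    (s : ℂ) (hs : Real.log A.card / Real.log b < s.re) (m : ℝ) (hm : 0 ≤ m) :
    ((Real.exp (-m) : ℝ) : ℂ) * egf b A s m
        = ∑' l : ℕ, egfTerm b (A.image fun a => b - 1 - a) s m l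
    ∧ (∀ l : ℕ, ‖egfTerm b (A.image fun a => b - 1 - a) s m l‖
        ≤ (A.card : ℝ) ^ l * (b : ℝ) ^ (-(l : ℝ) * s.re))
    ∧ Summable (fun l : ℕ => ‖egfTerm b (A.image fun a => b - 1 - a) s m l‖) := by
  have hbR : (0 : ℝ) < b := by positivity
  have hNpos : (0 : ℝ) < A.card := by exact_mod_cast hA.card_pos
  set B := A.image fun a => b - 1 - a with hB
  have hinj : ∀ x ∈ A, ∀ y ∈ A, b - 1 - x = b - 1 - y → x = y := by
    intro x hx y hy h
    have hx' := Finset.mem_range.mp (hAb hx)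
    have hy' := Finset.mem_range.mp (hAb hy)
    omega
  have hcardB : B.card = A.card := Finset.card_image_of_injOn hinj
  -- Part 1: equality
  have part1 : ((Real.exp (-m) : ℝ) : ℂ) * egf b A s m = ∑' l : ℕ, egfTerm b B s m l := by
    rw [egf, ← tsum_mul_left]
    refine tsum_congr fun l => ?_
    have h1 := term_eq b hb A hAb m l
    calc ((Real.exp (-m) : ℝ) : ℂ)
          * ∑ a ∈ tuples A l, ((Real.exp (m * digitVal b l a) : ℝ) : ℂ) * (b : ℂ) ^ (-(l : ℂ) * s)
        = ((Real.exp (-m) * ∑ a ∈ tuples A l, Real.exp (m * digitVal b l a) : ℝ) : ℂ)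
            * (b : ℂ) ^ (-(l : ℂ) * s) := by
          rw [← Finset.sum_mul, Complex.ofReal_mul, Complex.ofReal_sum, mul_assoc]
      _ = egfTerm b B s m l := by
          rw [h1, egfTerm, Complex.ofReal_mul]
  -- Part 2: bound
  have part2 : ∀ l : ℕ, ‖egfTerm b B s m l‖
      ≤ (A.card : ℝ) ^ l * (b : ℝ) ^ (-(l : ℝ) * s.re) := by
    intro l
    have hfac : ∀ k : ℕ, 0 ≤ alphaB B (-(m * (b : ℝ) ^ (-(k : ℤ))))
        ∧ alphaB B (-(m * (b : ℝ) ^ (-(k : ℤ)))) ≤ (A.card : ℝ) := by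
      intro k
      constructor
      · refine Finset.sum_nonneg fun d _ => (Real.exp_pos _).le
      · rw [alphaB]
        calc ∑ d ∈ B, Real.exp ((d : ℝ) * -(m * (b : ℝ) ^ (-(k : ℤ))))
            ≤ ∑ d ∈ B, 1 := by
              refine Finset.sum_le_sum fun d _ => ?_
              rw [Real.exp_le_one_iff]
              have : (0 : ℝ) ≤ (d : ℝ) * (m * (b : ℝ) ^ (-(k : ℤ))) := by positivity
              nlinarith
          _ = (A.card : ℝ) := by rw [Finset.sum_const, hcardB]; simp
    have hprod : ∏ k ∈ Finset.Icc 1 l, alphaB B (-(m * (b : ℝ) ^ (-(k : ℤ))))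
        ≤ (A.card : ℝ) ^ l := by
      calc ∏ k ∈ Finset.Icc 1 l, alphaB B (-(m * (b : ℝ) ^ (-(k : ℤ))))
          ≤ ∏ k ∈ Finset.Icc 1 l, (A.card : ℝ) :=
            Finset.prod_le_prod (fun k _ => (hfac k).1) (fun k _ => (hfac k).2)
        _ = (A.card : ℝ) ^ l := by rw [Finset.prod_const, Nat.card_Icc]; norm_num
    have hprodnn : 0 ≤ ∏ k ∈ Finset.Icc 1 l, alphaB B (-(m * (b : ℝ) ^ (-(k : ℤ)))) :=
      Finset.prod_nonneg fun k _ => (hfac k).1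
    have hexp : Real.exp (-(m * (b : ℝ) ^ (-(l : ℤ)))) ≤ 1 := by
      rw [Real.exp_le_one_iff]
      have : (0 : ℝ) ≤ m * (b : ℝ) ^ (-(l : ℤ)) := by positivity
      linarith
    have hcpow : ‖(b : ℂ) ^ (-(l : ℂ) * s)‖ = (b : ℝ) ^ (-(l : ℝ) * s.re) := by
      have : ((b : ℝ) : ℂ) = (b : ℂ) := by norm_cast
      rw [← this, Complex.norm_cpow_eq_rpow_re_of_pos hbR]
      congr 1
      simp [Complex.mul_re]
    rw [egfTerm, norm_mul, norm_mul, Complex.norm_real, Complex.norm_real, hcpow]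
    have h1 : |∏ k ∈ Finset.Icc 1 l, alphaB B (-(m * (b : ℝ) ^ (-(k : ℤ))))|
        ≤ (A.card : ℝ) ^ l := by rw [abs_of_nonneg hprodnn]; exact hprod
    have h2 : |Real.exp (-(m * (b : ℝ) ^ (-(l : ℤ))))| ≤ 1 := by
      rw [abs_of_pos (Real.exp_pos _)]; exact hexp
    have hrpownn : (0 : ℝ) ≤ (b : ℝ) ^ (-(l : ℝ) * s.re) := Real.rpow_nonneg hbR.le _
    calc |∏ k ∈ Finset.Icc 1 l, alphaB B (-(m * (b : ℝ) ^ (-(k : ℤ))))|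
          * |Real.exp (-(m * (b : ℝ) ^ (-(l : ℤ))))| * (b : ℝ) ^ (-(l : ℝ) * s.re)
        ≤ (A.card : ℝ) ^ l * 1 * (b : ℝ) ^ (-(l : ℝ) * s.re) := by
          have := mul_le_mul (mul_le_mul h1 h2 (abs_nonneg _) (by positivity))
            (le_refl ((b : ℝ) ^ (-(l : ℝ) * s.re))) hrpownn (by positivity)
          exact this
      _ = (A.card : ℝ) ^ l * (b : ℝ) ^ (-(l : ℝ) * s.re) := by ring
  -- Part 3: summability
  have part3 : Summable (fun l : ℕ => ‖egfTerm b B s m l‖) := by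
    have hlogb : 0 < Real.log b := Real.log_pos (by exact_mod_cast hb)
    have hlt : (A.card : ℝ) < (b : ℝ) ^ s.re := by
      rw [Real.lt_rpow_iff_log_lt hNpos hbR]
      rw [div_lt_iff₀ hlogb] at hs
      linarith
    have hr1 : (A.card : ℝ) * (b : ℝ) ^ (-s.re) < 1 := by
      rw [Real.rpow_neg hbR.le, ← div_eq_mul_inv, div_lt_one (Real.rpow_pos_of_pos hbR _)]
      exact hlt
    have hr0 : (0 : ℝ) ≤ (A.card : ℝ) * (b : ℝ) ^ (-s.re) := by positivity
    have hgeo : Summable (fun l : ℕ => ((A.card : ℝ) * (b : ℝ) ^ (-s.re)) ^ l) :=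
      summable_geometric_of_lt_one hr0 hr1
    refine Summable.of_nonneg_of_le (fun l => norm_nonneg _) (fun l => ?_) hgeo
    calc ‖egfTerm b B s m l‖ ≤ (A.card : ℝ) ^ l * (b : ℝ) ^ (-(l : ℝ) * s.re) := part2 l
      _ = ((A.card : ℝ) * (b : ℝ) ^ (-s.re)) ^ l := by
          rw [mul_pow, ← Real.rpow_natCast ((b : ℝ) ^ (-s.re)) l, ← Real.rpow_mul hbR.le]
          ring_nf
  exact ⟨part1, part2, part3⟩
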